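/- Let f have M-Lipschitz continuous Hessian, set 0 < ν < 1/2, and let [v; t] be a unit eigenvector of F = [[H_k, g_k], [g_kᵀ, -δ]] for its smallest eigenvalue -θ with θ > δ ≥ 0, where H_k = ∇²f(x_k), g_k = ∇f(x_k). If |t| < ν, let d = sign(-g_kᵀv)·v and η = Δ/‖d‖ with 0 < Δ < ‖d‖. Then f(x_k + ηd) - f(x_k) ≤ -(Δ²/2)δ + (M/6)Δ³. -/

import Mathlib

set_option maxHeartbeats 1000000

open intervalIntegral MeasureTheory

variable {E : Type*} [NormedAddCommGroup E] [InnerProductSpace ℝ E] [CompleteSpace E]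

lemma line_hasDerivAt (x s : E) (τ : ℝ) :
    HasDerivAt (fun τ : ℝ => x + τ • s) s τ := by
  simpa using ((hasDerivAt_id τ).smul_const s).const_add x

lemma grad_taylor (gf : E → E) (Hf : E → E →L[ℝ] E) (M : ℝ)
    (hhess : ∀ x, HasFDerivAt gf (Hf x) x)
    (hlip : ∀ x y, ‖Hf x - Hf y‖ ≤ M * ‖x - y‖)
    (x s : E) : ‖gf (x + s) - gf x - Hf x s‖ ≤ M / 2 * ‖s‖ ^ 2 := by
  have hHcont : Continuous Hf := by
    rcases le_or_gt M 0 with hM | hM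
    · have : ∀ a b, Hf a = Hf b := by
        intro a b
        have h := hlip a b
        have : ‖Hf a - Hf b‖ ≤ 0 :=
          h.trans (mul_nonpos_of_nonpos_of_nonneg hM (norm_nonneg _))
        have := le_antisymm this (norm_nonneg _)
        rwa [norm_eq_zero, sub_eq_zero] at this
      exact continuous_const.congr fun a => this x a
    · exact (LipschitzWith.of_dist_le_mul (K := ⟨M, hM.le⟩) fun a b => by
        rw [dist_eq_norm, dist_eq_norm]; exact hlip a b).continuous
  have hcont : Continuous fun τ : ℝ => Hf (x + τ • s) s := by
    exact ((ContinuousLinearMap.apply ℝ E s).continuous.comp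
      (hHcont.comp (by continuity))).congr (fun τ => rfl)
  have hderiv : ∀ τ ∈ Set.uIcc (0:ℝ) 1,
      HasDerivAt (fun τ : ℝ => gf (x + τ • s)) (Hf (x + τ • s) s) τ := fun τ _ =>
    (hhess _).comp_hasDerivAt τ (line_hasDerivAt x s τ)
  have hint : IntervalIntegrable (fun τ : ℝ => Hf (x + τ • s) s) volume 0 1 :=
    hcont.intervalIntegrable 0 1
  have hftc : (∫ τ in (0:ℝ)..1, Hf (x + τ • s) s) = gf (x + s) - gf x := by
    have := integral_eq_sub_of_hasDerivAt hderiv hint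
    simpa using this
  have hconst : (∫ τ in (0:ℝ)..1, Hf x s) = Hf x s := by simp
  have hsub : gf (x + s) - gf x - Hf x s
      = ∫ τ in (0:ℝ)..1, (Hf (x + τ • s) s - Hf x s) := by
    rw [integral_sub hint (intervalIntegrable_const), hftc, hconst]
  rw [hsub]
  have hbound : ∀ τ ∈ Set.Ioc (0:ℝ) 1,
      ‖Hf (x + τ • s) s - Hf x s‖ ≤ (M * ‖s‖ ^ 2) * τ := by
    intro τ hτ
    have h1 : ‖Hf (x + τ • s) s - Hf x s‖ ≤ ‖Hf (x + τ • s) - Hf x‖ * ‖s‖ := by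
      have := (Hf (x + τ • s) - Hf x).le_opNorm s
      simpa using this
    have h2 : ‖Hf (x + τ • s) - Hf x‖ ≤ M * (τ * ‖s‖) := by
      have := hlip (x + τ • s) x
      simpa [norm_smul, abs_of_pos hτ.1] using this
    calc ‖Hf (x + τ • s) s - Hf x s‖ ≤ (M * (τ * ‖s‖)) * ‖s‖ :=
          h1.trans (mul_le_mul_of_nonneg_right h2 (norm_nonneg _))
      _ = (M * ‖s‖ ^ 2) * τ := by ring
  have hae : ∀ᵐ τ ∂(volume.restrict (Set.uIoc (0:ℝ) 1)),
      ‖Hf (x + τ • s) s - Hf x s‖ ≤ (M * ‖s‖ ^ 2) * τ := by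
    filter_upwards [ae_restrict_mem measurableSet_uIoc] with τ hτ
    exact hbound τ (by simpa [Set.uIoc_of_le (zero_le_one' ℝ)] using hτ)
  have hgint : IntervalIntegrable (fun τ : ℝ => (M * ‖s‖ ^ 2) * τ) volume 0 1 :=
    (continuous_const.mul continuous_id).intervalIntegrable 0 1
  have hle := intervalIntegral.norm_integral_le_abs_of_norm_le hae hgint
  refine hle.trans ?_
  rw [intervalIntegral.integral_const_mul]
  rw [integral_id]
  have hMnn : 0 ≤ M * ‖s‖ ^ 2 := by
    have h := (norm_nonneg (Hf (x + (1:ℝ) • s) s - Hf x s)).trans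
      (hbound 1 ⟨one_pos, le_refl 1⟩)
    linarith
  rw [show ((1:ℝ)^2 - 0^2)/2 = 1/2 by norm_num, abs_of_nonneg (by positivity)]
  linarith

lemma fun_taylor (f : E → ℝ) (gf : E → E) (Hf : E → E →L[ℝ] E) (M : ℝ)
    (hgrad : ∀ x, HasGradientAt f (gf x) x)
    (hhess : ∀ x, HasFDerivAt gf (Hf x) x)
    (hlip : ∀ x y, ‖Hf x - Hf y‖ ≤ M * ‖x - y‖)
    (x s : E) :
    f (x + s) - f x ≤ (inner ℝ (gf x) s : ℝ) + 1 / 2 * (inner ℝ (Hf x s) s : ℝ)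
      + M / 6 * ‖s‖ ^ 3 := by
  have hgfc : Continuous gf := by
    have : Differentiable ℝ gf := fun y => (hhess y).differentiableAt
    exact this.continuous
  have hderiv : ∀ τ ∈ Set.uIcc (0:ℝ) 1,
      HasDerivAt (fun τ : ℝ => f (x + τ • s)) ((inner ℝ (gf (x + τ • s)) s : ℝ)) τ := by
    intro τ _
    have h := ((hgrad (x + τ • s)).hasFDerivAt).comp_hasDerivAt τ (line_hasDerivAt x s τ)
    exact h
  have hacont : Continuous fun τ : ℝ => (inner ℝ (gf (x + τ • s)) s : ℝ) := by
    exact (continuous_inner.comp (((hgfc.comp (by continuity)).prodMk continuous_const)))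
  have hint : IntervalIntegrable (fun τ : ℝ => (inner ℝ (gf (x + τ • s)) s : ℝ)) volume 0 1 :=
    hacont.intervalIntegrable 0 1
  have hftc : (∫ τ in (0:ℝ)..1, (inner ℝ (gf (x + τ • s)) s : ℝ)) = f (x + s) - f x := by
    have := integral_eq_sub_of_hasDerivAt hderiv hint
    simpa using this
  have hbound : ∀ τ ∈ Set.Icc (0:ℝ) 1,
      (inner ℝ (gf (x + τ • s)) s : ℝ) ≤
        (inner ℝ (gf x) s : ℝ) + τ * (inner ℝ (Hf x s) s : ℝ) + M / 2 * ‖s‖ ^ 3 * τ ^ 2 := by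
    intro τ _
    have key : (inner ℝ (gf (x + τ • s)) s : ℝ) - (inner ℝ (gf x) s : ℝ)
        - τ * (inner ℝ (Hf x s) s : ℝ)
        = (inner ℝ (gf (x + τ • s) - gf x - Hf x (τ • s)) s : ℝ) := by
      rw [inner_sub_left, inner_sub_left, ContinuousLinearMap.map_smul, real_inner_smul_left]
    have h1 : (inner ℝ (gf (x + τ • s) - gf x - Hf x (τ • s)) s : ℝ)
        ≤ ‖gf (x + τ • s) - gf x - Hf x (τ • s)‖ * ‖s‖ := real_inner_le_norm _ _
    have h2 : ‖gf (x + τ • s) - gf x - Hf x (τ • s)‖ ≤ M / 2 * ‖τ • s‖ ^ 2 :=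
      grad_taylor gf Hf M hhess hlip x (τ • s)
    have h3 : ‖τ • s‖ ^ 2 = τ ^ 2 * ‖s‖ ^ 2 := by
      simp [norm_smul, mul_pow, Real.norm_eq_abs, sq_abs]
    have h4 := mul_le_mul_of_nonneg_right h2 (norm_nonneg s)
    rw [h3] at h4
    have h5 : M / 2 * (τ ^ 2 * ‖s‖ ^ 2) * ‖s‖ = M / 2 * ‖s‖ ^ 3 * τ ^ 2 := by ring
    linarith [key, h1]
  have i1 : IntervalIntegrable (fun _ : ℝ => (inner ℝ (gf x) s : ℝ)) volume 0 1 :=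
    intervalIntegrable_const
  have i2 : IntervalIntegrable (fun τ : ℝ => τ * (inner ℝ (Hf x s) s : ℝ)) volume 0 1 :=
    (continuous_id.mul continuous_const).intervalIntegrable 0 1
  have i3 : IntervalIntegrable (fun τ : ℝ => M / 2 * ‖s‖ ^ 3 * τ ^ 2) volume 0 1 :=
    (continuous_const.mul (continuous_pow 2)).intervalIntegrable 0 1
  have hmono := intervalIntegral.integral_mono_on (zero_le_one) hint ((i1.add i2).add i3) hbound
  rw [hftc] at hmono
  refine hmono.trans ?_
  rw [intervalIntegral.integral_add (i1.add i2) i3, intervalIntegral.integral_add i1 i2,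
    intervalIntegral.integral_const, intervalIntegral.integral_mul_const,
    intervalIntegral.integral_const_mul, integral_id, integral_pow]
  norm_num
  linarith

/-- Sufficient decrease in the large-value case `|t| < ν` with the truncated
direction `d = sign(-gᵀv) v` and stepsize `η = Δ / ‖d‖`. -/
theorem large_step_truncated_decrease {n : ℕ}
    (f : EuclideanSpace ℝ (Fin n) → ℝ)
    (gf : EuclideanSpace ℝ (Fin n) → EuclideanSpace ℝ (Fin n))
    (Hf : EuclideanSpace ℝ (Fin n) → EuclideanSpace ℝ (Fin n) →L[ℝ] EuclideanSpace ℝ (Fin n))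
    (M ν δ θ Δ : ℝ)
    (hgrad : ∀ x, HasGradientAt f (gf x) x)
    (hhess : ∀ x, HasFDerivAt gf (Hf x) x)
    (hlip : ∀ x y, ‖Hf x - Hf y‖ ≤ M * ‖x - y‖)
    (hν0 : 0 < ν) (hν1 : ν < 1 / 2)
    (xk : EuclideanSpace ℝ (Fin n))
    (hδ : 0 ≤ δ) (hθ : δ < θ)
    (v : EuclideanSpace ℝ (Fin n)) (t : ℝ)
    (hunit : ‖v‖ ^ 2 + t ^ 2 = 1)
    (heig1 : Hf xk v + t • gf xk = (-θ) • v)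
    (heig2 : (inner ℝ (gf xk) v : ℝ) - δ * t = -θ * t)
    (hmin : ∀ (w : EuclideanSpace ℝ (Fin n)) (s : ℝ),
      (-θ) * (‖w‖ ^ 2 + s ^ 2) ≤
        (inner ℝ (Hf xk w) w : ℝ) + 2 * s * (inner ℝ (gf xk) w : ℝ) - δ * s ^ 2)
    (ht : |t| < ν)
    (d : EuclideanSpace ℝ (Fin n))
    (hdd : d = Real.sign (-(inner ℝ (gf xk) v : ℝ)) • v)
    (hΔ0 : 0 < Δ) (hΔd : Δ < ‖d‖) :
    f (xk + (Δ / ‖d‖) • d) - f xk ≤ -(Δ ^ 2 / 2) * δ + M / 6 * Δ ^ 3 := by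
  set γ : ℝ := (inner ℝ (gf xk) v : ℝ) with hγdef
  set σ : ℝ := Real.sign (-γ) with hσdef
  have hd0 : (0:ℝ) < ‖d‖ := hΔ0.trans hΔd
  -- σ properties
  have hσ : σ = 1 ∨ σ = -1 := by
    rcases lt_trichotomy γ 0 with h | h | h
    · left; rw [hσdef]; exact Real.sign_of_pos (by linarith)
    · exfalso
      have : d = 0 := by rw [hdd, hσdef, h, neg_zero, Real.sign_zero, zero_smul]
      rw [this, norm_zero] at hd0; exact lt_irrefl 0 hd0
    · right; rw [hσdef]; exact Real.sign_of_neg (by linarith)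
  have hσsq : σ ^ 2 = 1 := by rcases hσ with h | h <;> rw [h] <;> norm_num
  have hσabs : |σ| = 1 := by rcases hσ with h | h <;> rw [h] <;> norm_num
  have hσγ : σ * γ ≤ 0 := by
    rcases lt_trichotomy γ 0 with h | h | h
    · rw [hσdef, Real.sign_of_pos (by linarith : (0:ℝ) < -γ)]; linarith
    · rw [h]; simp
    · rw [hσdef, Real.sign_of_neg (by linarith : -γ < 0)]; linarith
  -- norms
  have hnd : ‖d‖ = ‖v‖ := by rw [hdd, norm_smul, Real.norm_eq_abs, hσabs, one_mul]
  have hv0 : (0:ℝ) < ‖v‖ := by rw [← hnd]; exact hd0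
  -- eigen relations
  have hγt : γ = (δ - θ) * t := by linarith [heig2]
  have hHvv : (inner ℝ (Hf xk v) v : ℝ) = -θ * ‖v‖ ^ 2 - t * γ := by
    have h1 : Hf xk v = (-θ) • v - t • gf xk := by
      rw [← heig1]; abel
    rw [h1, inner_sub_left, real_inner_smul_left, real_inner_smul_left,
      real_inner_self_eq_norm_sq]
  -- inner products with d
  have hgd : (inner ℝ (gf xk) d : ℝ) = σ * γ := by
    rw [hdd, real_inner_smul_right]
  have hHdd : (inner ℝ (Hf xk d) d : ℝ) = -θ * ‖v‖ ^ 2 - t * γ := by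
    rw [hdd, ContinuousLinearMap.map_smul, real_inner_smul_left,
      real_inner_smul_right, ← mul_assoc, ← pow_two, hσsq, one_mul, hHvv]
  -- stepsize
  set η : ℝ := Δ / ‖d‖ with hηdef
  have hη0 : 0 < η := div_pos hΔ0 hd0
  have hηd : η * ‖d‖ = Δ := div_mul_cancel₀ Δ (ne_of_gt hd0)
  have hsnorm : ‖η • d‖ = Δ := by
    rw [norm_smul, Real.norm_eq_abs, abs_of_pos hη0, hηd]
  -- Taylor bound
  have htay := fun_taylor f gf Hf M hgrad hhess hlip xk (η • d)
  rw [hsnorm] at htay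
  have hig : (inner ℝ (gf xk) (η • d) : ℝ) = η * (σ * γ) := by
    rw [real_inner_smul_right, hgd]
  have hiH : (inner ℝ (Hf xk (η • d)) (η • d) : ℝ) = η ^ 2 * (-θ * ‖v‖ ^ 2 - t * γ) := by
    rw [ContinuousLinearMap.map_smul, real_inner_smul_left, real_inner_smul_right,
      ← mul_assoc, ← pow_two, hHdd]
  rw [hig, hiH] at htay
  refine htay.trans ?_
  -- numeric estimates
  have hηv : η * ‖v‖ = Δ := by rw [← hnd]; exact hηd
  clear_value η σ γ
  clear hmin hgrad hhess hlip htay hig hiH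
  have ht2 : t ^ 2 ≤ ‖v‖ ^ 2 := by
    have h1 : t ^ 2 < ν ^ 2 := by
      have h := sq_abs t
      nlinarith [abs_nonneg t]
    nlinarith
  have hq1 : η ^ 2 * ‖v‖ ^ 2 = Δ ^ 2 := by nlinarith [hηv]
  have hq2 : η ^ 2 * t ^ 2 ≤ Δ ^ 2 := by nlinarith [sq_nonneg η]
  have htγ : t * γ = (δ - θ) * t ^ 2 := by rw [hγt]; ring
  have h0 : η * (σ * γ) ≤ 0 := by
    have := mul_le_mul_of_nonneg_left hσγ hη0.le
    simpa using this
  have hkey : 0 ≤ (θ - δ) * (Δ ^ 2 - η ^ 2 * t ^ 2) :=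
    mul_nonneg (by linarith) (by linarith [hq2])
  nlinarith [hq1, h0, htγ, hkey]
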